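/- For integers m ≥ 2 and 1 ≤ k ≤ m-1, assuming Gauss' digamma theorem, ∑_{r=1}^{m-1} ψ(r/m)·sin(2πrk/m) = (π/2)·(2k - m). -/

import Mathlib

open Real Finset


lemma L1 (m : ℕ) (n : ℤ) :
    ∑ r ∈ Finset.Icc 1 (m - 1), Real.sin (2 * π * r * n / m) = 0 := by
  rcases Nat.eq_zero_or_pos m with h | hm
  · subst h; simp
  have key : ∑ r ∈ Finset.Icc 1 (m - 1), Real.sin (2 * π * r * n / m)
      = ∑ r ∈ Finset.Icc 1 (m - 1), Real.sin (2 * π * ((m : ℕ) - r : ℕ) * n / m) := by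
    apply Finset.sum_nbij' (fun r => m - r) (fun r => m - r)
    case hi => intro a ha; simp only [Finset.mem_Icc] at ha ⊢; omega
    case hj => intro a ha; simp only [Finset.mem_Icc] at ha ⊢; omega
    case left_neg => intro a ha; simp only [Finset.mem_Icc] at ha; omega
    case right_neg => intro a ha; simp only [Finset.mem_Icc] at ha; omega
    case h =>
      intro a ha; simp only [Finset.mem_Icc] at ha
      rw [Nat.sub_sub_self (by omega : a ≤ m)]
  have key2 : ∀ r ∈ Finset.Icc 1 (m - 1),
      Real.sin (2 * π * ((m : ℕ) - r : ℕ) * n / m) = -Real.sin (2 * π * r * n / m) := by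
    intro r hr
    simp only [Finset.mem_Icc] at hr
    have hrm : (((m - r : ℕ) : ℝ)) = (m : ℝ) - r := by
      have : r ≤ m := by omega
      push_cast [this]; ring
    rw [hrm]
    have hm0 : (m : ℝ) ≠ 0 := by positivity
    have : 2 * π * ((m : ℝ) - r) * n / m = n * (2 * π) - 2 * π * r * n / m := by
      field_simp
    rw [this, Real.sin_int_mul_two_pi_sub]
  rw [Finset.sum_congr rfl key2] at key
  simp only [Finset.sum_neg_distrib] at key
  linarith [key]

lemma L2 (m j : ℕ) (hm : 2 ≤ m) (hj1 : 1 ≤ j) (hj2 : j ≤ m - 1) :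
    ∑ r ∈ Finset.Icc 1 (m - 1), Real.cos (2 * π * j * r / m) = -1 := by
  have hm0 : (m : ℝ) ≠ 0 := by positivity
  set ζ : ℂ := Complex.exp ((2 * π * j / m : ℝ) * Complex.I) with hζ
  have hζ1 : ζ ≠ 1 := by
    rw [hζ, Ne, Complex.exp_eq_one_iff]
    rintro ⟨n, hn⟩
    have him := congrArg Complex.im hn
    simp [Complex.ofReal_mul, Complex.mul_I_im] at him
    -- him : 2 * π * j / m = n * (2 * π)
    have hπ : (0:ℝ) < π := Real.pi_pos
    have hj' : (j : ℝ) = n * m := by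
      field_simp at him
      nlinarith [him]
    have h1 : (0:ℝ) < j := by exact_mod_cast hj1
    have h2 : (j:ℝ) < m := by exact_mod_cast (by omega : j < m)
    have hmpos : (0:ℝ) < m := by positivity
    have hn0 : (0:ℝ) < n := by nlinarith
    have hn1 : (n:ℝ) < 1 := by nlinarith
    have : (0:ℤ) < n := by exact_mod_cast hn0
    have : (n:ℤ) < 1 := by exact_mod_cast hn1
    omega
  have hζm : ζ ^ m = 1 := by
    rw [hζ, ← Complex.exp_nat_mul]
    have : (m : ℂ) * ((2 * π * j / m : ℝ) * Complex.I) = (j : ℤ) * (2 * π * Complex.I) := by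
      push_cast
      have : (m : ℂ) ≠ 0 := by exact_mod_cast (by positivity : (m:ℝ) ≠ 0)
      field_simp
    rw [this, Complex.exp_int_mul_two_pi_mul_I]
  have hgeom : ∑ r ∈ Finset.range m, ζ ^ r = 0 := by
    rw [geom_sum_eq hζ1, hζm]
    simp
  have hre : ∀ r : ℕ, (ζ ^ r).re = Real.cos (2 * π * j * r / m) := by
    intro r
    rw [hζ, ← Complex.exp_nat_mul]
    have : (r : ℂ) * ((2 * π * j / m : ℝ) * Complex.I) = ((2 * π * j * r / m : ℝ)) * Complex.I := by
      push_cast; ring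
    rw [this, Complex.exp_ofReal_mul_I_re]
  have hsum : ∑ r ∈ Finset.range m, Real.cos (2 * π * j * r / m) = 0 := by
    have := congrArg Complex.re hgeom
    rw [Complex.re_sum] at this
    simpa [hre] using this
  have hsplit : ∑ r ∈ Finset.range m, Real.cos (2 * π * j * r / m)
      = Real.cos (2 * π * j * 0 / m) + ∑ r ∈ Finset.Icc 1 (m - 1), Real.cos (2 * π * j * r / m) := by
    rw [Finset.range_eq_Ico, ← Finset.sum_Ico_consecutive _ (by omega : 0 ≤ 1) (by omega : 1 ≤ m)]
    have h1 : Finset.Ico 1 m = Finset.Icc 1 (m - 1) := by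
      rw [← Finset.Ico_add_one_right_eq_Icc]; congr 1; omega
    rw [h1]
    simp
  rw [hsplit] at hsum
  simp at hsum
  linarith

lemma Lstep (θ A : ℝ) :
    Real.cos θ * Real.sin (A + 2 * θ) - Real.cos θ * Real.sin A
      = Real.sin θ * (Real.cos A + Real.cos (A + 2 * θ)) := by
  rw [Real.sin_add, Real.cos_add, Real.sin_two_mul, Real.cos_two_mul]
  linear_combination 2 * Real.cos θ * Real.sin A * Real.sin_sq_add_cos_sq θ

lemma L3' (θ : ℝ) (k : ℕ) :
    Real.cos θ * Real.sin (2 * (k + 1) * θ)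
      = Real.sin θ * (1 + 2 * ∑ j ∈ Finset.Icc 1 k, Real.cos (2 * j * θ)
          + Real.cos (2 * (k + 1) * θ)) := by
  induction k with
  | zero =>
    simp only [Nat.cast_zero, zero_add, mul_one, Finset.Icc_self]
    norm_num
    rw [show (2:ℝ) * θ = θ + θ by ring, Real.sin_add, Real.cos_add]
    linear_combination Real.sin θ * Real.sin_sq_add_cos_sq θ
  | succ n ih =>
    have hsum : ∑ j ∈ Finset.Icc 1 (n + 1), Real.cos (2 * (j : ℝ) * θ)
        = ∑ j ∈ Finset.Icc 1 n, Real.cos (2 * (j : ℝ) * θ)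
          + Real.cos (2 * ((n : ℝ) + 1) * θ) := by
      rw [Finset.sum_Icc_succ_top (by omega : 1 ≤ n + 1)]
      push_cast
      ring
    have key := Lstep θ (2 * ((n : ℝ) + 1) * θ)
    push_cast
    rw [hsum, show (2:ℝ) * ((n:ℝ) + 1 + 1) * θ = 2 * ((n : ℝ) + 1) * θ + 2 * θ by ring]
    linarith [key, ih]

lemma L4 (m k : ℕ) (hm : 2 ≤ m) (hk1 : 1 ≤ k) (hk2 : k ≤ m - 1) :
    ∑ r ∈ Finset.Icc 1 (m - 1), Real.cot (π * r / m) * Real.sin (2 * π * r * k / m)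
      = (m : ℝ) - 2 * k := by
  have hmR : (0:ℝ) < m := by exact_mod_cast (by omega : 0 < m)
  have hterm : ∀ r ∈ Finset.Icc 1 (m - 1),
      Real.cot (π * r / m) * Real.sin (2 * π * r * k / m)
        = 1 + 2 * ∑ j ∈ Finset.Icc 1 (k - 1), Real.cos (2 * π * j * r / m)
            + Real.cos (2 * π * k * r / m) := by
    intro r hr
    simp only [Finset.mem_Icc] at hr
    set θ : ℝ := π * r / m with hθ
    have hrR : (1:ℝ) ≤ r := by exact_mod_cast hr.1
    have hrR2 : (r:ℝ) < m := by exact_mod_cast (by omega : r < m)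
    have hθpos : 0 < θ := by
      rw [hθ]; positivity
    have hθlt : θ < π := by
      rw [hθ, div_lt_iff₀ hmR]
      nlinarith [Real.pi_pos]
    have hs : Real.sin θ ≠ 0 := ne_of_gt (Real.sin_pos_of_pos_of_lt_pi hθpos hθlt)
    have h3 := L3' θ (k - 1)
    have hc1 : ((k - 1 : ℕ) : ℝ) + 1 = (k : ℝ) := by
      have : (1:ℕ) ≤ k := hk1
      push_cast [this]; ring
    rw [hc1] at h3
    have e1 : Real.sin (2 * π * r * k / m) = Real.sin (2 * (k : ℝ) * θ) := by
      rw [hθ]; congr 1; ring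
    have e2 : Real.cos (2 * π * k * r / m) = Real.cos (2 * (k : ℝ) * θ) := by
      rw [hθ]; congr 1; ring
    have e3 : ∀ j : ℕ, Real.cos (2 * π * j * r / m) = Real.cos (2 * (j : ℝ) * θ) := by
      intro j; rw [hθ]; congr 1; ring
    rw [e1, e2, Real.cot_eq_cos_div_sin]
    simp only [e3]
    field_simp
    simp only [show ∀ x : ℕ, 2 * θ * (x:ℝ) = 2 * x * θ from fun x => by ring]
    linarith [h3]
  rw [Finset.sum_congr rfl hterm]
  rw [Finset.sum_add_distrib, Finset.sum_add_distrib]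
  have c1 : ∑ r ∈ Finset.Icc 1 (m - 1), (1:ℝ) = (m : ℝ) - 1 := by
    rw [Finset.sum_const, Nat.card_Icc]
    have : m - 1 + 1 - 1 = m - 1 := by omega
    rw [this]
    have : ((m - 1 : ℕ) : ℝ) = (m : ℝ) - 1 := by
      push_cast [(by omega : 1 ≤ m)]; ring
    simp [this]
  have c2 : ∑ r ∈ Finset.Icc 1 (m - 1),
      2 * ∑ j ∈ Finset.Icc 1 (k - 1), Real.cos (2 * π * j * r / m)
        = -2 * ((k : ℝ) - 1) := by
    have : ∑ r ∈ Finset.Icc 1 (m - 1), ∑ j ∈ Finset.Icc 1 (k - 1), Real.cos (2 * π * j * r / m)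
        = ∑ j ∈ Finset.Icc 1 (k - 1), ∑ r ∈ Finset.Icc 1 (m - 1), Real.cos (2 * π * j * r / m) :=
      Finset.sum_comm
    rw [← Finset.mul_sum, this]
    have hj : ∀ j ∈ Finset.Icc 1 (k - 1),
        ∑ r ∈ Finset.Icc 1 (m - 1), Real.cos (2 * π * j * r / m) = -1 := by
      intro j hj
      simp only [Finset.mem_Icc] at hj
      exact L2 m j hm hj.1 (by omega)
    rw [Finset.sum_congr rfl hj, Finset.sum_const, Nat.card_Icc]
    have : ((k - 1 + 1 - 1 : ℕ) : ℝ) = (k : ℝ) - 1 := by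
      push_cast [(by omega : 1 ≤ k)]; ring
    simp only [nsmul_eq_mul, this]
    ring
  have c3 : ∑ r ∈ Finset.Icc 1 (m - 1), Real.cos (2 * π * k * r / m) = -1 :=
    L2 m k hm hk1 hk2
  rw [c1, c2, c3]
  ring

/-- The digamma function ψ(x) = Γ'(x)/Γ(x). -/
noncomputable def digamma (x : ℝ) : ℝ := deriv Real.Gamma x / Real.Gamma x

theorem stmt13 (m : ℕ) (hm : 2 ≤ m) (k : ℕ) (hk1 : 1 ≤ k) (hk2 : k ≤ m - 1)
    (hGauss : ∀ r : ℕ, 1 ≤ r → r ≤ m - 1 →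
      digamma (r / m) =
        -Real.eulerMascheroniConstant - Real.log (2 * m) - (π / 2) * Real.cot (π * r / m)
          + ∑ l ∈ Finset.Icc 1 (m - 1),
              Real.cos (2 * π * r * l / m) * Real.log (Real.sin (π * l / m))) :
    (∑ r ∈ Finset.Icc 1 (m - 1), digamma (r / m) * Real.sin (2 * π * r * k / m)) =
      (π / 2) * (2 * k - m) := by
  have hmR : (0:ℝ) < m := by exact_mod_cast (by omega : 0 < m)
  have hm0 : (m:ℝ) ≠ 0 := ne_of_gt hmR
  have hterm : ∀ r ∈ Finset.Icc 1 (m - 1),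
      digamma (r / m) * Real.sin (2 * π * r * k / m)
        = (-Real.eulerMascheroniConstant - Real.log (2 * m)) * Real.sin (2 * π * r * k / m)
          + (-(π / 2)) * (Real.cot (π * r / m) * Real.sin (2 * π * r * k / m))
          + ∑ l ∈ Finset.Icc 1 (m - 1),
              (Real.cos (2 * π * r * l / m) * Real.log (Real.sin (π * l / m)))
                * Real.sin (2 * π * r * k / m) := by
    intro r hr
    simp only [Finset.mem_Icc] at hr
    rw [hGauss r hr.1 hr.2, ← Finset.sum_mul]
    ring
  rw [Finset.sum_congr rfl hterm, Finset.sum_add_distrib, Finset.sum_add_distrib]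
  have hsin0 : ∀ n : ℤ, ∑ r ∈ Finset.Icc 1 (m - 1), Real.sin (2 * π * r * (n : ℝ) / m) = 0 :=
    fun n => L1 m n
  have t1 : ∑ r ∈ Finset.Icc 1 (m - 1),
      (-Real.eulerMascheroniConstant - Real.log (2 * m)) * Real.sin (2 * π * r * k / m) = 0 := by
    rw [← Finset.mul_sum]
    have := hsin0 (k : ℤ)
    push_cast at this
    rw [this, mul_zero]
  have t2 : ∑ r ∈ Finset.Icc 1 (m - 1),
      (-(π / 2)) * (Real.cot (π * r / m) * Real.sin (2 * π * r * k / m))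
        = (π / 2) * (2 * (k:ℝ) - m) := by
    rw [← Finset.mul_sum, L4 m k hm hk1 hk2]
    ring
  have t3 : ∑ r ∈ Finset.Icc 1 (m - 1), ∑ l ∈ Finset.Icc 1 (m - 1),
      (Real.cos (2 * π * r * l / m) * Real.log (Real.sin (π * l / m)))
        * Real.sin (2 * π * r * k / m) = 0 := by
    rw [Finset.sum_comm]
    apply Finset.sum_eq_zero
    intro l hl
    have hpt : ∀ r : ℕ,
        (Real.cos (2 * π * r * l / m) * Real.log (Real.sin (π * l / m)))
          * Real.sin (2 * π * r * k / m)
        = Real.log (Real.sin (π * l / m))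
            * ((1/2) * Real.sin (2 * π * r * (((k : ℤ) + l : ℤ) : ℝ) / m)
              + (1/2) * Real.sin (2 * π * r * (((k : ℤ) - l : ℤ) : ℝ) / m)) := by
      intro r
      have ea : 2 * π * r * (((k : ℤ) + l : ℤ) : ℝ) / m
          = 2 * π * r * k / m + 2 * π * r * l / m := by
        push_cast; field_simp
      have eb : 2 * π * r * (((k : ℤ) - l : ℤ) : ℝ) / m
          = 2 * π * r * k / m - 2 * π * r * l / m := by
        push_cast; field_simp
      rw [ea, eb, Real.sin_add, Real.sin_sub]
      ring
    simp only [hpt]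
    rw [← Finset.mul_sum, Finset.sum_add_distrib, ← Finset.mul_sum, ← Finset.mul_sum,
      hsin0 ((k : ℤ) + l), hsin0 ((k : ℤ) - l)]
    ring
  rw [t1, t2, t3]
  ring
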